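/- Let G be a finite d-regular graph with girth at least 2k, and for a real vector α = (α_0, ..., α_{k-1}) define for each vertex i the vector v_i ∈ ℝ^V by (v_i)_j = α_ℓ if dist(i,j) = ℓ < k and 0 otherwise. Then the squared norm of v_i equals α_0² + Σ_{ℓ=1}^{k-1} d(d-1)^{ℓ-1} α_ℓ². -/

import Mathlib

namespace SimpleGraph
variable {V : Type*} {G : SimpleGraph V}

open Walk

lemma takeUntil_cons' [DecidableEq V] {a x b t : V} (r : G.Adj a x)
    (p' : G.Walk x b) (h : t ∈ (Walk.cons r p').support) (hat : a ≠ t) :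
    ∃ h' : t ∈ p'.support, (Walk.cons r p').takeUntil t h = Walk.cons r (p'.takeUntil t h') := by
  have h' : t ∈ p'.support := by
    rcases by simpa using h with h1 | h1
    · exact absurd h1.symm hat
    · exact h1
  refine ⟨h', ?_⟩
  simp only [Walk.takeUntil]
  rw [dif_neg hat]

lemma cycle_of_two_paths [DecidableEq V] :
    ∀ (n : ℕ) {a b : V} (p q : G.Walk a b), p.length + q.length ≤ n →
    p.IsPath → q.IsPath → p ≠ q →
    ∃ (c : V) (w : G.Walk c c), w.IsCycle ∧ w.length ≤ p.length + q.length := by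
  intro n
  induction n with
  | zero =>
    intro a b p q hlen hp hq hne
    cases p with
    | nil =>
      cases q with
      | nil => exact absurd rfl hne
      | cons _ _ => simp at hlen
    | cons _ _ => simp at hlen
  | succ n ih =>
    intro a b p q hlen hp hq hne
    cases p with
    | nil =>
      exact absurd (Walk.isPath_iff_eq_nil.mp hq).symm hne
    | @cons _ x _ r p' =>
      cases q with
      | nil => exact absurd (Walk.isPath_iff_eq_nil.mp hp) hne
      | @cons _ y _ s q' =>
        obtain ⟨hp', hap⟩ := (Walk.cons_isPath_iff r p').mp hp
        obtain ⟨hq', haq⟩ := (Walk.cons_isPath_iff s q').mp hq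
        by_cases hxy : x = y
        · subst hxy
          have hne' : p' ≠ q' := fun h => hne (by rw [h])
          obtain ⟨c, w, hw, hwl⟩ := ih p' q'
            (by simp only [Walk.length_cons] at hlen ⊢; omega) hp' hq' hne'
          exact ⟨c, w, hw, by simp only [Walk.length_cons] at hwl ⊢; omega⟩
        · by_cases hsplit : ∃ t, t ∈ p'.support ∧ t ∈ q'.support ∧ t ≠ b
          · obtain ⟨t, htp', htq', htb⟩ := hsplit
            have htp : t ∈ (Walk.cons r p').support := by simp [htp']
            have htq : t ∈ (Walk.cons s q').support := by simp [htq']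
            have hta : a ≠ t := fun h => hap (h ▸ htp')
            obtain ⟨hp'm, hpeq⟩ := takeUntil_cons' r p' htp hta
            obtain ⟨hq'm, hqeq⟩ := takeUntil_cons' s q' htq hta
            have hne1 : (Walk.cons r p').takeUntil t htp ≠ (Walk.cons s q').takeUntil t htq := by
              intro h
              apply hxy
              have := congrArg Walk.support h
              rw [hpeq, hqeq, Walk.support_cons, Walk.support_cons,
                Walk.support_eq_cons (p'.takeUntil t hp'm),
                Walk.support_eq_cons (q'.takeUntil t hq'm)] at this
              exact (List.cons.injEq _ _ _ _ ▸ this).2 |> fun h2 =>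
                (List.cons.injEq _ _ _ _ ▸ h2).1
            have hlt : ((Walk.cons s q').takeUntil t htq).length < (Walk.cons s q').length := by
              have hspec := congrArg Walk.length ((Walk.cons s q').take_spec htq)
              rw [Walk.length_append] at hspec
              have hd0 : ((Walk.cons s q').dropUntil t htq).length ≠ 0 := by
                intro h0
                exact htb (Walk.eq_of_length_eq_zero h0)
              omega
            have hle : ((Walk.cons r p').takeUntil t htp).length ≤ (Walk.cons r p').length :=
              Walk.length_takeUntil_le _ htp
            obtain ⟨c, w, hw, hwl⟩ := ih ((Walk.cons r p').takeUntil t htp)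
              ((Walk.cons s q').takeUntil t htq) (by omega)
              (hp.takeUntil htp) (hq.takeUntil htq) hne1
            exact ⟨c, w, hw, by omega⟩
          · push_neg at hsplit
            have hab : a ≠ b := fun h => hap (h ▸ Walk.end_mem_support p')
            refine ⟨a, (Walk.cons r p').append (Walk.cons s q').reverse, ?_, by
              simp only [Walk.length_append, Walk.length_reverse]; omega⟩
            have hedge : ∀ z w', s(z, w') ∈ (Walk.cons r p').edges →
                s(z, w') ∈ (Walk.cons s q').edges → False := by
              intro z w' hzp hzq
              have hzne : z ≠ w' := ((Walk.cons r p').adj_of_mem_edges hzp).ne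
              have hmem : ∀ u, u ∈ (Walk.cons r p').support → u ∈ (Walk.cons s q').support →
                  u = a ∨ u = b := by
                intro u hup huq
                rcases by simpa using hup with h1 | h1
                · exact Or.inl h1
                rcases by simpa using huq with h2 | h2
                · exact Or.inl h2
                exact Or.inr (hsplit u h1 h2)
              have hz := hmem z (Walk.fst_mem_support_of_mem_edges _ hzp)
                (Walk.fst_mem_support_of_mem_edges _ hzq)
              have hw' := hmem w' (Walk.snd_mem_support_of_mem_edges _ hzp)
                (Walk.snd_mem_support_of_mem_edges _ hzq)
              -- so the edge is s(a,b); show that forces x = b and y = b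
              have hab_p : s(a, b) ∈ (Walk.cons r p').edges := by
                rcases hz with rfl | rfl <;> rcases hw' with rfl | rfl
                · exact absurd rfl hzne
                · exact hzp
                · exact (Sym2.eq_swap ▸ hzp)
                · exact absurd rfl hzne
              have hab_q : s(a, b) ∈ (Walk.cons s q').edges := by
                rcases hz with rfl | rfl <;> rcases hw' with rfl | rfl
                · exact absurd rfl hzne
                · exact hzq
                · exact (Sym2.eq_swap ▸ hzq)
                · exact absurd rfl hzne
              have hxb : x = b := by
                rw [Walk.edges_cons, List.mem_cons] at hab_p
                rcases hab_p with h1 | h1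
                · rw [Sym2.eq_iff] at h1
                  rcases h1 with ⟨-, h⟩ | ⟨h1, -⟩
                  · exact h.symm
                  · exact absurd h1 r.ne
                · exact absurd (Walk.fst_mem_support_of_mem_edges p' h1) hap
              have hyb : y = b := by
                rw [Walk.edges_cons, List.mem_cons] at hab_q
                rcases hab_q with h1 | h1
                · rw [Sym2.eq_iff] at h1
                  rcases h1 with ⟨-, h⟩ | ⟨h1, -⟩
                  · exact h.symm
                  · exact absurd h1 s.ne
                · exact absurd (Walk.fst_mem_support_of_mem_edges q' h1) haq
              exact hxy (hxb.trans hyb.symm)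
            rw [Walk.isCycle_def]
            refine ⟨?_, ?_, ?_⟩
            · -- trail
              rw [Walk.isTrail_def, Walk.edges_append, Walk.edges_reverse]
              rw [List.nodup_append]
              refine ⟨hp.isTrail.edges_nodup, List.nodup_reverse.mpr hq.isTrail.edges_nodup, ?_⟩
              intro e hep e2 heq hee
              subst hee
              rw [List.mem_reverse] at heq
              induction e using Sym2.ind with
              | _ z w' => exact hedge z w' hep heq
            · simp [Walk.cons_append]
            · -- support tail nodup
              rw [Walk.tail_support_append]
              have h1 : (Walk.cons r p').support.tail = p'.support := by
                rw [Walk.support_cons]; rfl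
              rw [h1]
              have hrevnodup : ((Walk.cons s q').reverse).support.Nodup := by
                rw [Walk.support_reverse, List.nodup_reverse]; exact hq.support_nodup
              have hrev_cons : ((Walk.cons s q').reverse).support =
                  b :: ((Walk.cons s q').reverse).support.tail :=
                Walk.support_eq_cons _
              rw [List.nodup_append]
              refine ⟨hp'.support_nodup, ?_, ?_⟩
              · exact (hrev_cons ▸ hrevnodup).of_cons
              · intro z hzp' z2 hzt hzz
                subst hzz
                have hzq : z ∈ (Walk.cons s q').support := by
                  have : z ∈ ((Walk.cons s q').reverse).support := by
                    rw [hrev_cons]; exact List.mem_cons_of_mem _ hzt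
                  rwa [Walk.support_reverse, List.mem_reverse] at this
                have hza : z ≠ a := fun h => hap (h ▸ hzp')
                have hzq' : z ∈ q'.support := by
                  rcases by simpa using hzq with h1 | h1
                  · exact absurd h1 hza
                  · exact h1
                have hzb : z = b := hsplit z hzp' hzq'
                have hbnot : b ∉ ((Walk.cons s q').reverse).support.tail :=
                  (List.nodup_cons.mp (hrev_cons ▸ hrevnodup)).1
                exact hbnot (hzb ▸ hzt)

lemma cycle_of_two_paths'' [DecidableEq V] {a b : V} (p q : G.Walk a b)
    (hp : p.IsPath) (hq : q.IsPath) (hne : p ≠ q) :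
    ∃ (c : V) (w : G.Walk c c), w.IsCycle ∧ w.length ≤ p.length + q.length :=
  cycle_of_two_paths (p.length + q.length) p q le_rfl hp hq hne

lemma path_eq_of_girth [DecidableEq V] {k : ℕ} (hg : 2 * k ≤ G.girth) {a b : V}
    {p q : G.Walk a b} (hp : p.IsPath) (hq : q.IsPath)
    (hl : p.length + q.length < 2 * k) : p = q := by
  by_contra hne
  obtain ⟨c, w, hw, hwl⟩ := cycle_of_two_paths'' p q hp hq hne
  have h1 : G.egirth ≤ (w.length : ℕ∞) := iInf_le_of_le c (iInf_le_of_le w (iInf_le _ hw))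
  have h2 : G.girth ≤ w.length := by
    have := ENat.toNat_le_toNat h1 (by simp)
    simpa [SimpleGraph.girth] using this
  omega

lemma mem_support_dist_lt {a b z : V} [DecidableEq V] (p : G.Walk a b) (hz : z ∈ p.support)
    (hzb : z ≠ b) : G.dist a z < p.length := by
  have hspec := congrArg Walk.length (p.take_spec hz)
  rw [Walk.length_append] at hspec
  have hd0 : (p.dropUntil z hz).length ≠ 0 := fun h0 => hzb (Walk.eq_of_length_eq_zero h0)
  have := G.dist_le (p.takeUntil z hz)
  omega

lemma dist_le_adj' {i u j : V} (hr : G.Reachable i u) (ha : G.Adj u j) :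
    G.dist i j ≤ G.dist i u + 1 := by
  obtain ⟨p, hp, hl⟩ := hr.exists_path_of_dist
  have := G.dist_le (p.concat ha)
  rwa [Walk.length_concat, hl] at this

lemma isPath_concat {a b c : V} {p : G.Walk a b} (hp : p.IsPath) (h : G.Adj b c)
    (hc : c ∉ p.support) : (p.concat h).IsPath := by
  rw [← Walk.isPath_reverse_iff, Walk.reverse_concat]
  rw [Walk.cons_isPath_iff]
  exact ⟨hp.reverse, by simpa [Walk.support_reverse] using hc⟩

section Counting

variable [Fintype V] [DecidableEq V] [DecidableRel G.Adj] {d k : ℕ} {i : V}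

/-- uniqueness of the parent -/
lemma parent_card_one (hg : 2 * k ≤ G.girth) {m : ℕ} (hmk : m + 2 ≤ k) {j : V}
    (hj : G.Reachable i j) (hdj : G.dist i j = m + 1) :
    (Finset.univ.filter fun u => (G.Reachable i u ∧ G.dist i u = m) ∧ G.Adj u j).card = 1 := by
  have hex : ∃ u, (G.Reachable i u ∧ G.dist i u = m) ∧ G.Adj u j := by
    obtain ⟨p, hp, hl⟩ := hj.exists_path_of_dist
    have : ∃ q : G.Walk j i, q.IsPath ∧ q.length = m + 1 :=
      ⟨p.reverse, hp.reverse, by simp [hl, hdj]⟩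
    obtain ⟨q, hq, hql⟩ := this
    cases q with
    | nil => simp at hql
    | @cons _ u _ ha q1 =>
      refine ⟨u, ⟨⟨q1.reverse⟩, ?_⟩, ha.symm⟩
      have h1 : G.dist i u ≤ m := by
        have := G.dist_le q1.reverse
        simp only [Walk.length_reverse] at this
        simp only [Walk.length_cons] at hql
        omega
      have h2 : G.dist i j ≤ G.dist i u + 1 := dist_le_adj' ⟨q1.reverse⟩ ha.symm
      omega
  obtain ⟨u, hu⟩ := hex
  have huniq : ∀ u', ((G.Reachable i u' ∧ G.dist i u' = m) ∧ G.Adj u' j) → u' = u := by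
    have key : ∀ u1 u2, ((G.Reachable i u1 ∧ G.dist i u1 = m) ∧ G.Adj u1 j) →
        ((G.Reachable i u2 ∧ G.dist i u2 = m) ∧ G.Adj u2 j) → u1 = u2 := by
      rintro u1 u2 ⟨⟨hr1, hd1⟩, ha1⟩ ⟨⟨hr2, hd2⟩, ha2⟩
      obtain ⟨p1, hp1, hl1⟩ := hr1.exists_path_of_dist
      obtain ⟨p2, hp2, hl2⟩ := hr2.exists_path_of_dist
      have hj1 : j ∉ p1.support := by
        intro hmem
        have := mem_support_dist_lt p1 hmem ha1.ne'
        omega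
      have hj2 : j ∉ p2.support := by
        intro hmem
        have := mem_support_dist_lt p2 hmem ha2.ne'
        omega
      have hw1 : (p1.concat ha1).IsPath := isPath_concat hp1 ha1 hj1
      have hw2 : (p2.concat ha2).IsPath := isPath_concat hp2 ha2 hj2
      have heq : p1.concat ha1 = p2.concat ha2 := by
        apply path_eq_of_girth hg hw1 hw2
        rw [Walk.length_concat, Walk.length_concat, hl1, hl2, hd1, hd2]
        omega
      have := congrArg Walk.support (congrArg Walk.reverse heq)
      rw [Walk.reverse_concat, Walk.reverse_concat, Walk.support_cons, Walk.support_cons,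
        Walk.support_eq_cons p1.reverse, Walk.support_eq_cons p2.reverse] at this
      exact (List.cons.injEq _ _ _ _ ▸ this).2 |> fun h2 => (List.cons.injEq _ _ _ _ ▸ h2).1
    exact fun u' h => key u' u h hu
  rw [Finset.card_eq_one]
  refine ⟨u, ?_⟩
  ext z
  simp only [Finset.mem_filter, Finset.mem_univ, true_and, Finset.mem_singleton]
  exact ⟨fun h => huniq z h, fun h => h ▸ hu⟩

/-- no edges within/into the same sphere level -/
lemma no_sibling (hg : 2 * k ≤ G.girth) {m : ℕ} (hmk : m + 2 ≤ k) {u j : V}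
    (hu : G.Reachable i u) (hdu : G.dist i u = m) (ha : G.Adj u j) : G.dist i j ≠ m := by
  intro hdj
  have hj : G.Reachable i j := hu.trans ha.reachable
  rcases Nat.eq_zero_or_pos m with hm0 | hm0
  · subst hm0
    have : i = u := hu.dist_eq_zero_iff.mp hdu
    have : i = j := hj.dist_eq_zero_iff.mp hdj
    subst this; subst this
    exact G.loopless.irrefl _ ha
  · obtain ⟨p, hp, hl⟩ := hu.exists_path_of_dist
    obtain ⟨pj, hpj, hlj⟩ := hj.exists_path_of_dist
    have hu_not : u ∉ pj.support := by
      intro hmem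
      have := mem_support_dist_lt pj hmem ha.ne
      omega
    have hw : (pj.concat ha.symm).IsPath := isPath_concat hpj ha.symm hu_not
    have heq : p = pj.concat ha.symm := by
      apply path_eq_of_girth hg hp hw
      rw [Walk.length_concat, hl, hlj, hdu, hdj]
      omega
    have := congrArg Walk.length heq
    rw [Walk.length_concat, hl, hlj, hdu, hdj] at this
    omega

/-- each vertex at level m (1 ≤ m ≤ k-2) has exactly d - 1 children -/
lemma child_card (hg : 2 * k ≤ G.girth) (hreg : G.IsRegularOfDegree d) {m : ℕ}
    (hm1 : 1 ≤ m) (hmk : m + 2 ≤ k) {u : V}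
    (hu : G.Reachable i u) (hdu : G.dist i u = m) :
    (Finset.univ.filter fun j => (G.Reachable i j ∧ G.dist i j = m + 1) ∧ G.Adj u j).card
      = d - 1 := by
  obtain ⟨m', rfl⟩ : ∃ m', m = m' + 1 := ⟨m - 1, by omega⟩
  have hP : (Finset.univ.filter fun x =>
      (G.Reachable i x ∧ G.dist i x = m') ∧ G.Adj x u).card = 1 :=
    parent_card_one hg (by omega) hu hdu
  have hset : (Finset.univ.filter fun j =>
      (G.Reachable i j ∧ G.dist i j = m' + 1 + 1) ∧ G.Adj u j)
      = G.neighborFinset u \ (Finset.univ.filter fun x =>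
        (G.Reachable i x ∧ G.dist i x = m') ∧ G.Adj x u) := by
    ext j
    simp only [Finset.mem_filter, Finset.mem_univ, true_and, Finset.mem_sdiff,
      mem_neighborFinset]
    constructor
    · rintro ⟨⟨hrj, hdj⟩, haj⟩
      exact ⟨haj, fun h => by omega⟩
    · rintro ⟨haj, hnot⟩
      have hrj : G.Reachable i j := hu.trans haj.reachable
      have h1 : G.dist i j ≤ m' + 1 + 1 := by
        have := dist_le_adj' hu haj
        omega
      have h2 : m' + 1 ≤ G.dist i j + 1 := by
        have := dist_le_adj' hrj haj.symm
        omega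
      have h3 : G.dist i j ≠ m' + 1 := no_sibling hg hmk hu hdu haj
      have h4 : G.dist i j ≠ m' := fun h => hnot ⟨⟨hrj, h⟩, haj.symm⟩
      exact ⟨⟨hrj, by omega⟩, haj⟩
  rw [hset, Finset.card_sdiff_of_subset, hP, card_neighborFinset_eq_degree, hreg u]
  intro x hx
  simp only [Finset.mem_filter] at hx
  rw [mem_neighborFinset]
  exact hx.2.2.symm

lemma double_count (A B : Finset V) (r : V → V → Prop) [DecidableRel r] :
    ∑ u ∈ A, (B.filter (r u)).card = ∑ j ∈ B, (A.filter (fun u => r u j)).card := by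
  simp only [Finset.card_filter]
  rw [Finset.sum_comm]

lemma sphere_step (hg : 2 * k ≤ G.girth) (hreg : G.IsRegularOfDegree d) {m : ℕ}
    (hm1 : 1 ≤ m) (hmk : m + 2 ≤ k) :
    (Finset.univ.filter fun j : V => G.Reachable i j ∧ G.dist i j = m + 1).card
      = (Finset.univ.filter fun u : V => G.Reachable i u ∧ G.dist i u = m).card * (d - 1) := by
  set Sm := Finset.univ.filter fun u : V => G.Reachable i u ∧ G.dist i u = m with hSm
  set Sm1 := Finset.univ.filter fun j : V => G.Reachable i j ∧ G.dist i j = m + 1 with hSm1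
  have h1 : ∀ j ∈ Sm1, (Sm.filter (fun u => G.Adj u j)).card = 1 := by
    intro j hj
    rw [hSm1, Finset.mem_filter] at hj
    rw [hSm, Finset.filter_filter]
    exact parent_card_one hg (by omega) hj.2.1 hj.2.2
  have h2 : ∀ u ∈ Sm, (Sm1.filter (fun j => G.Adj u j)).card = d - 1 := by
    intro u hu
    rw [hSm, Finset.mem_filter] at hu
    rw [hSm1, Finset.filter_filter]
    exact child_card hg hreg hm1 hmk hu.2.1 hu.2.2
  calc Sm1.card = ∑ j ∈ Sm1, 1 := by simp
    _ = ∑ j ∈ Sm1, (Sm.filter (fun u => G.Adj u j)).card :=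
        (Finset.sum_congr rfl h1).symm
    _ = ∑ u ∈ Sm, (Sm1.filter (fun j => G.Adj u j)).card :=
        (double_count Sm Sm1 G.Adj).symm
    _ = ∑ u ∈ Sm, (d - 1) := Finset.sum_congr rfl h2
    _ = Sm.card * (d - 1) := by rw [Finset.sum_const, smul_eq_mul]

lemma sphere_card (hg : 2 * k ≤ G.girth) (hreg : G.IsRegularOfDegree d)
    (hd : 2 ≤ d) {m : ℕ} (hm1 : 1 ≤ m) (hmk : m + 1 ≤ k) :
    (Finset.univ.filter fun j : V => G.Reachable i j ∧ G.dist i j = m).card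
      = d * (d - 1) ^ (m - 1) := by
  induction m with
  | zero => omega
  | succ m ihm =>
    rcases Nat.eq_zero_or_pos m with hm0 | hm0
    · subst hm0
      have : (Finset.univ.filter fun j : V => G.Reachable i j ∧ G.dist i j = 1)
          = G.neighborFinset i := by
        ext j
        simp only [Finset.mem_filter, Finset.mem_univ, true_and, mem_neighborFinset]
        constructor
        · rintro ⟨_, hd1⟩
          exact dist_eq_one_iff_adj.mp hd1
        · intro ha
          exact ⟨ha.reachable, dist_eq_one_iff_adj.mpr ha⟩
      rw [this, card_neighborFinset_eq_degree, hreg i]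
      simp
    · rw [sphere_step hg hreg hm0 (by omega), ihm hm0 (by omega)]
      have e1 : m - 1 + 1 = m := by omega
      rw [Nat.succ_sub_one, mul_assoc, ← pow_succ, e1]

end Counting

end SimpleGraph

open Real

theorem norm_sq_explicit_vector {V : Type*} [Fintype V] [DecidableEq V]
    (G : SimpleGraph V) [DecidableRel G.Adj] (d k : ℕ) (hd : 2 ≤ d) (hk : 2 ≤ k)
    (hreg : G.IsRegularOfDegree d) (hgirth : 2 * k ≤ G.girth)
    (α : ℕ → ℝ)
    (v : V → V → ℝ)
    (hv : v = fun i j => if G.Reachable i j ∧ G.dist i j < k then α (G.dist i j) else 0)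
    (i : V) :
    ∑ j, (v i j) ^ 2 =
      α 0 ^ 2 + ∑ ℓ ∈ Finset.Ico 1 k, (d : ℝ) * (d - 1) ^ (ℓ - 1) * α ℓ ^ 2 := by
  subst hv
  have hS0 : (Finset.univ.filter fun j : V => G.Reachable i j ∧ G.dist i j = 0) = {i} := by
    ext j
    simp only [Finset.mem_filter, Finset.mem_univ, true_and, Finset.mem_singleton]
    constructor
    · rintro ⟨hr, h0⟩
      exact (hr.dist_eq_zero_iff.mp h0).symm
    · rintro rfl
      exact ⟨SimpleGraph.Reachable.refl _, SimpleGraph.dist_self⟩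
  calc ∑ j, (if G.Reachable i j ∧ G.dist i j < k then α (G.dist i j) else 0) ^ 2
      = ∑ j ∈ Finset.univ.filter (fun j => G.Reachable i j ∧ G.dist i j < k),
          α (G.dist i j) ^ 2 := by
        rw [Finset.sum_filter]
        refine Finset.sum_congr rfl fun j _ => ?_
        split_ifs <;> simp
    _ = ∑ m ∈ Finset.range k,
          ∑ j ∈ (Finset.univ.filter (fun j => G.Reachable i j ∧ G.dist i j < k)).filter
            (fun j => G.dist i j = m), α (G.dist i j) ^ 2 := by
        refine (Finset.sum_fiberwise_of_maps_to (fun j hj => ?_) _).symm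
        rw [Finset.mem_filter] at hj
        exact Finset.mem_range.mpr hj.2.2
    _ = ∑ m ∈ Finset.range k,
          ((Finset.univ.filter fun j : V => G.Reachable i j ∧ G.dist i j = m).card : ℝ)
            * α m ^ 2 := by
        refine Finset.sum_congr rfl fun m hm => ?_
        rw [Finset.mem_range] at hm
        have hfil : (Finset.univ.filter (fun j : V => G.Reachable i j ∧ G.dist i j < k)).filter
            (fun j => G.dist i j = m)
            = Finset.univ.filter fun j : V => G.Reachable i j ∧ G.dist i j = m := by
          rw [Finset.filter_filter]
          ext j
          simp only [Finset.mem_filter, Finset.mem_univ, true_and]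
          constructor
          · rintro ⟨⟨hr, -⟩, h⟩; exact ⟨hr, h⟩
          · rintro ⟨hr, h⟩; exact ⟨⟨hr, by omega⟩, h⟩
        rw [hfil]
        rw [Finset.sum_congr rfl (fun j hj => by
          rw [(Finset.mem_filter.mp hj).2.2]), Finset.sum_const, nsmul_eq_mul]
    _ = α 0 ^ 2 + ∑ ℓ ∈ Finset.Ico 1 k, (d : ℝ) * (d - 1) ^ (ℓ - 1) * α ℓ ^ 2 := by
        rw [Finset.range_eq_Ico, Finset.sum_eq_sum_Ico_succ_bot (by omega : 0 < k)]
        rw [hS0]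
        simp only [Finset.card_singleton, Nat.cast_one, one_mul, zero_add]
        congr 1
        refine Finset.sum_congr rfl fun m hm => ?_
        rw [Finset.mem_Ico] at hm
        rw [SimpleGraph.sphere_card hgirth hreg hd hm.1 (by omega)]
        rw [Nat.cast_mul, Nat.cast_pow, Nat.cast_sub (by omega : 1 ≤ d), Nat.cast_one]
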